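/- arXiv:0707.3179 — 5 statements merged into one kernel-verified Lean document; each statement's English description precedes it below -/
import Mathlib

section
/- For an elliptic curve with N_k = 1 + q^k − α₁^k − α₂^k where α₁+α₂ = 1+q−N₁ and α₁α₂ = q, one has 1 + q^k − N_k = L_{2k}(q, −N₁) for all k ≥ 1, where L_n(q,t) is the (q,t)-Lucas polynomial. -/
/-- The (q,t)-Lucas polynomial: sum over subsets `S ⊆ {1,…,n}` with no two elements
circularly consecutive mod `n`, weighted by `q^(# even elements of S) * t^(⌊n/2⌋ - #S)`. -/
def qtLucas {R : Type*} [CommRing R] (q t : R) (n : ℕ) : R :=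
  ∑ S ∈ (Finset.Icc 1 n).powerset.filter (fun S => ∀ x ∈ S, (x % n + 1) ∉ S),
    q ^ (S.filter (fun x => Even x)).card * t ^ (n / 2 - S.card)

namespace QtLucasAux

/-- Path-restricted sum: independent sets in the path on `[a, j]`, with `t`-budget `K`. -/
def F {R : Type*} [CommRing R] (q t : R) (a j K : ℕ) : R :=
  ∑ S ∈ (Finset.Icc a j).powerset.filter (fun S => ∀ x ∈ S, (x + 1) ∉ S),
    q ^ (S.filter (fun x => Even x)).card * t ^ (K - S.card)

lemma Icc_insert (a b : ℕ) (h : a ≤ b + 1) :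
    Finset.Icc a (b + 1) = insert (b + 1) (Finset.Icc a b) := by
  ext x; simp only [Finset.mem_Icc, Finset.mem_insert]; omega

lemma sum_filter_powerset_insert {R : Type*} [AddCommMonoid R] {b : ℕ} {A : Finset ℕ}
    (hb : b ∉ A) (P : Finset ℕ → Prop) [DecidablePred P] (f : Finset ℕ → R) :
    ∑ S ∈ (insert b A).powerset.filter P, f S
      = (∑ S ∈ A.powerset.filter P, f S)
        + ∑ S ∈ A.powerset.filter (fun S => P (insert b S)), f (insert b S) := by
  rw [Finset.sum_filter, Finset.sum_filter, Finset.sum_filter,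
    Finset.sum_powerset_insert hb]

/-- Cardinality bound for independent sets in the path `[a, j]`. -/
lemma card_le {S : Finset ℕ} {a j : ℕ}
    (hS : S ∈ (Finset.Icc a j).powerset.filter (fun S => ∀ x ∈ S, (x + 1) ∉ S)) :
    S.card ≤ (j + 2 - a) / 2 := by
  rw [Finset.mem_filter, Finset.mem_powerset] at hS
  obtain ⟨hsub, hind⟩ := hS
  have h1 : ∀ x ∈ S, (fun x => (x + 2 - a) / 2) x ∈ Finset.Icc 1 ((j + 2 - a) / 2) := by
    intro x hx
    have := Finset.mem_Icc.mp (hsub hx)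
    simp only [Finset.mem_Icc]
    omega
  have h2 : Set.InjOn (fun x => (x + 2 - a) / 2) S := by
    intro x hx y hy hxy
    by_contra hne
    simp only at hxy
    rcases Nat.lt_or_ge x y with h | h
    · have hy1 : y ≠ x + 1 := fun hc => hind x hx (hc ▸ hy)
      have hax := Finset.mem_Icc.mp (hsub hx)
      omega
    · rcases Nat.lt_or_ge y x with h' | h'
      · have hx1 : x ≠ y + 1 := fun hc => hind y hy (hc ▸ hx)
        have hay := Finset.mem_Icc.mp (hsub hy)
        omega
      · omega
  calc S.card ≤ (Finset.Icc 1 ((j + 2 - a) / 2)).card :=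
        Finset.card_le_card_of_injOn _ h1 h2
    _ = (j + 2 - a) / 2 := by rw [Nat.card_Icc]; omega

variable {R : Type*} [CommRing R] (q t : R)

/-- One-step recurrence for path sums (peeling the top vertex). -/
lemma F_succ (a j K : ℕ) (h : a ≤ j + 2) :
    F q t a (j + 2) (K + 1)
      = F q t a (j + 1) (K + 1) + (if Even (j + 2) then q else 1) * F q t a j K := by
  unfold F
  rw [Icc_insert a (j + 1) h, sum_filter_powerset_insert (by simp) _ _]
  congr 1
  have hset : (Finset.Icc a (j + 1)).powerset.filter
        (fun S => ∀ x ∈ insert (j + 2) S, (x + 1) ∉ insert (j + 2) S)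
      = (Finset.Icc a j).powerset.filter (fun S => ∀ x ∈ S, (x + 1) ∉ S) := by
    ext S
    simp only [Finset.mem_filter, Finset.mem_powerset]
    constructor
    · rintro ⟨hsub, hP⟩
      constructor
      · intro x hx
        have hx' := Finset.mem_Icc.mp (hsub hx)
        have h2 := hP x (Finset.mem_insert_of_mem hx)
        simp only [Finset.mem_insert] at h2
        push_neg at h2
        have : x + 1 ≠ j + 2 := h2.1
        simp only [Finset.mem_Icc]
        omega
      · intro x hx hx1
        have h2 := hP x (Finset.mem_insert_of_mem hx)
        simp only [Finset.mem_insert] at h2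
        push_neg at h2
        exact h2.2 hx1
    · rintro ⟨hsub, hP⟩
      refine ⟨fun x hx => by have := Finset.mem_Icc.mp (hsub hx); simp only [Finset.mem_Icc]; omega, ?_⟩
      intro x hx
      rcases Finset.mem_insert.mp hx with rfl | hxS
      · simp only [Finset.mem_insert]
        push_neg
        refine ⟨by omega, fun hc => ?_⟩
        have := Finset.mem_Icc.mp (hsub hc); omega
      · simp only [Finset.mem_insert]
        push_neg
        refine ⟨?_, hP x hxS⟩
        have := Finset.mem_Icc.mp (hsub hxS); omega
  rw [hset, Finset.mul_sum]
  apply Finset.sum_congr rfl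
  intro S hS
  rw [Finset.mem_filter, Finset.mem_powerset] at hS
  have hj2 : (j + 2) ∉ S := by
    intro hc; have := Finset.mem_Icc.mp (hS.1 hc); omega
  have hcard : (insert (j + 2) S).card = S.card + 1 := Finset.card_insert_of_notMem hj2
  have hexp : K + 1 - (S.card + 1) = K - S.card := by omega
  have hfil : ((insert (j + 2) S).filter (fun x => Even x)).card
      = (if Even (j + 2) then 1 else 0) + (S.filter (fun x => Even x)).card := by
    rw [Finset.filter_insert]
    split
    · rw [Finset.card_insert_of_notMem (fun hc => hj2 (Finset.mem_of_mem_filter _ hc))]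
      omega
    · simp
  rw [hcard, hfil, hexp]
  split
  · rw [pow_add, pow_one]; ring
  · rw [pow_add, pow_zero]; ring

/-- Raising the `t`-budget multiplies by `t`, provided the budget suffices. -/
lemma F_t (a j K : ℕ) (hK : (j + 2 - a) / 2 ≤ K) :
    F q t a j (K + 1) = t * F q t a j K := by
  unfold F
  rw [Finset.mul_sum]
  apply Finset.sum_congr rfl
  intro S hS
  have hc : S.card ≤ K := le_trans (card_le hS) hK
  have : K + 1 - S.card = (K - S.card) + 1 := by omega
  rw [this, pow_succ]
  ring

/-- Decomposition of the cyclic sum into two path sums, conditioning on the top vertex. -/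
lemma qtLucas_decomp (m : ℕ) :
    qtLucas q t (2 * (m + 1)) = F q t 1 (2 * m + 1) (m + 1) + q * F q t 2 (2 * m) m := by
  unfold qtLucas F
  have hn : 2 * (m + 1) = (2 * m + 1) + 1 := by ring
  have hdiv : 2 * (m + 1) / 2 = m + 1 := by omega
  rw [hdiv, hn, Icc_insert 1 (2 * m + 1) (by omega), sum_filter_powerset_insert (by simp) _ _]
  congr 1
  · -- first branch: the cyclic condition reduces to the path condition
    apply Finset.sum_congr
    · ext S
      simp only [Finset.mem_filter, Finset.mem_powerset]
      constructor
      · rintro ⟨hsub, hP⟩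
        refine ⟨hsub, fun x hx => ?_⟩
        have hxle := (Finset.mem_Icc.mp (hsub hx)).2
        have hmod : x % (2 * m + 1 + 1) = x := Nat.mod_eq_of_lt (by omega)
        have := hP x hx; rwa [hmod] at this
      · rintro ⟨hsub, hP⟩
        refine ⟨hsub, fun x hx => ?_⟩
        have hxle := (Finset.mem_Icc.mp (hsub hx)).2
        have hmod : x % (2 * m + 1 + 1) = x := Nat.mod_eq_of_lt (by omega)
        rw [hmod]; exact hP x hx
    · intro S _; rfl
  · -- second branch: inserting the top vertex `2m+2`
    have hset : (Finset.Icc 1 (2 * m + 1)).powerset.filter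
          (fun S : Finset ℕ => ∀ x ∈ insert (2 * m + 1 + 1) S,
            (x % (2 * m + 1 + 1) + 1) ∉ insert (2 * m + 1 + 1) S)
        = (Finset.Icc 2 (2 * m)).powerset.filter (fun S => ∀ x ∈ S, (x + 1) ∉ S) := by
      ext S
      simp only [Finset.mem_filter, Finset.mem_powerset]
      constructor
      · rintro ⟨hsub, hP⟩
        have h1 : (1 : ℕ) ∉ S := by
          have h2 := hP (2 * m + 1 + 1) (Finset.mem_insert_self _ _)
          rw [Nat.mod_self] at h2
          simp only [Finset.mem_insert] at h2
          push_neg at h2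
          exact h2.2
        constructor
        · intro x hx
          have hx' := Finset.mem_Icc.mp (hsub hx)
          have h2 := hP x (Finset.mem_insert_of_mem hx)
          rw [Nat.mod_eq_of_lt (by omega : x < 2 * m + 1 + 1)] at h2
          simp only [Finset.mem_insert] at h2
          push_neg at h2
          have hx1 : x ≠ 1 := fun hc => h1 (hc ▸ hx)
          have : x + 1 ≠ 2 * m + 1 + 1 := h2.1
          simp only [Finset.mem_Icc]
          omega
        · intro x hx hc
          have hx' := Finset.mem_Icc.mp (hsub hx)
          have h2 := hP x (Finset.mem_insert_of_mem hx)
          rw [Nat.mod_eq_of_lt (by omega : x < 2 * m + 1 + 1)] at h2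
          simp only [Finset.mem_insert] at h2
          push_neg at h2
          exact h2.2 hc
      · rintro ⟨hsub, hP⟩
        refine ⟨fun x hx => by
          have := Finset.mem_Icc.mp (hsub hx); simp only [Finset.mem_Icc]; omega, ?_⟩
        intro x hx
        rcases Finset.mem_insert.mp hx with rfl | hxS
        · rw [Nat.mod_self]
          simp only [Finset.mem_insert]
          push_neg
          refine ⟨by omega, fun hc => ?_⟩
          have := Finset.mem_Icc.mp (hsub hc); omega
        · have hx' := Finset.mem_Icc.mp (hsub hxS)
          rw [Nat.mod_eq_of_lt (by omega : x < 2 * m + 1 + 1)]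
          simp only [Finset.mem_insert]
          push_neg
          exact ⟨by omega, hP x hxS⟩
    rw [hset, Finset.mul_sum]
    apply Finset.sum_congr rfl
    intro S hS
    rw [Finset.mem_filter, Finset.mem_powerset] at hS
    have hnS : (2 * m + 1 + 1) ∉ S := by
      intro hc; have := Finset.mem_Icc.mp (hS.1 hc); omega
    have hcard : (insert (2 * m + 1 + 1) S).card = S.card + 1 :=
      Finset.card_insert_of_notMem hnS
    have hfil : ((insert (2 * m + 1 + 1) S).filter (fun x => Even x)).card
        = (S.filter (fun x => Even x)).card + 1 := by
      have hev : Even (2 * m + 1 + 1) := ⟨m + 1, by ring⟩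
      rw [Finset.filter_insert, if_pos hev]
      rw [Finset.card_insert_of_notMem (fun hc => hnS (Finset.mem_of_mem_filter _ hc))]
    have hexp : m + 1 - (S.card + 1) = m - S.card := by omega
    rw [hcard, hfil, hexp, pow_succ]
    ring

/-- `D(i+1) = A(i) + q·D(i)` where `A i = F 1 (2i+1) (i+1)`, `D i = F 1 (2i+2) (i+1)`. -/
lemma rec_i (i : ℕ) :
    F q t 1 (2 * i + 2) (i + 1) = F q t 1 (2 * i + 1) (i + 1) + q * F q t 1 (2 * i) i := by
  have h := F_succ q t 1 (2 * i) i (by omega)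
  have hev : Even (2 * i + 2) := ⟨i + 1, by ring⟩
  rwa [if_pos hev] at h

/-- `A(i+1) = t·D(i) + A(i)`. -/
lemma rec_ii (i : ℕ) :
    F q t 1 (2 * i + 3) (i + 2)
      = t * F q t 1 (2 * i + 2) (i + 1) + F q t 1 (2 * i + 1) (i + 1) := by
  have h := F_succ q t 1 (2 * i + 1) (i + 1) (by omega)
  have e1 : 2 * i + 1 + 2 = 2 * i + 3 := by omega
  have e2 : 2 * i + 1 + 1 = 2 * i + 2 := by omega
  have e3 : i + 1 + 1 = i + 2 := by omega
  rw [e1, e2, e3] at h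
  have hodd : ¬ Even (2 * i + 3) := by rw [Nat.even_iff]; omega
  rw [if_neg hodd, one_mul] at h
  have ht : F q t 1 (2 * i + 2) (i + 1 + 1) = t * F q t 1 (2 * i + 2) (i + 1) :=
    F_t q t 1 (2 * i + 2) (i + 1) (by omega)
  rw [e3] at ht
  rw [ht] at h
  exact h

/-- `E(i+1) = B(i+1) + E(i)` where `B i = F 2 (2i) i`, `E i = F 2 (2i+1) i`. -/
lemma rec_iii (i : ℕ) :
    F q t 2 (2 * i + 3) (i + 1)
      = F q t 2 (2 * i + 2) (i + 1) + F q t 2 (2 * i + 1) i := by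
  have h := F_succ q t 2 (2 * i + 1) i (by omega)
  have e1 : 2 * i + 1 + 2 = 2 * i + 3 := by omega
  have e2 : 2 * i + 1 + 1 = 2 * i + 2 := by omega
  rw [e1, e2] at h
  have hodd : ¬ Even (2 * i + 3) := by rw [Nat.even_iff]; omega
  rwa [if_neg hodd, one_mul] at h

/-- `B(i+1) = t·E(i) + q·B(i)`. -/
lemma rec_iv (i : ℕ) :
    F q t 2 (2 * i + 2) (i + 1)
      = t * F q t 2 (2 * i + 1) i + q * F q t 2 (2 * i) i := by
  have h := F_succ q t 2 (2 * i) i (by omega)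
  have hev : Even (2 * i + 2) := ⟨i + 1, by ring⟩
  rw [if_pos hev] at h
  have ht : F q t 2 (2 * i + 1) (i + 1) = t * F q t 2 (2 * i + 1) i :=
    F_t q t 2 (2 * i + 1) i (by omega)
  rw [ht] at h
  exact h

/-- Second-order recurrence for the `A` family. -/
lemma A_rec (j : ℕ) :
    F q t 1 (2 * j + 5) (j + 3)
      = (1 + q + t) * F q t 1 (2 * j + 3) (j + 2) - q * F q t 1 (2 * j + 1) (j + 1) := by
  have e1 := rec_ii q t (j + 1)
  have e2 := rec_i q t (j + 1)
  have e3 := rec_ii q t j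
  have n1 : 2 * (j + 1) + 3 = 2 * j + 5 := by omega
  have n2 : 2 * (j + 1) + 2 = 2 * j + 4 := by omega
  have n3 : 2 * (j + 1) + 1 = 2 * j + 3 := by omega
  have n4 : 2 * (j + 1) = 2 * j + 2 := by omega
  have n5 : j + 1 + 2 = j + 3 := by omega
  have n6 : j + 1 + 1 = j + 2 := by omega
  rw [n1, n2, n3, n5, n6] at e1
  rw [n2, n3, n4, n6] at e2
  linear_combination e1 + t * e2 - q * e3

/-- Second-order recurrence for the `B` family. -/
lemma B_rec (j : ℕ) :
    F q t 2 (2 * j + 4) (j + 2)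
      = (1 + q + t) * F q t 2 (2 * j + 2) (j + 1) - q * F q t 2 (2 * j) j := by
  have e1 := rec_iv q t (j + 1)
  have e2 := rec_iii q t j
  have e3 := rec_iv q t j
  have n1 : 2 * (j + 1) + 2 = 2 * j + 4 := by omega
  have n2 : 2 * (j + 1) + 1 = 2 * j + 3 := by omega
  have n3 : 2 * (j + 1) = 2 * j + 2 := by omega
  have n6 : j + 1 + 1 = j + 2 := by omega
  rw [n1, n2, n3, n6] at e1
  linear_combination e1 + t * e2 - e3

/-- Second-order recurrence for the (q,t)-Lucas polynomials at even index. -/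
lemma L_rec (m : ℕ) :
    qtLucas q t (2 * (m + 3))
      = (1 + q + t) * qtLucas q t (2 * (m + 2)) - q * qtLucas q t (2 * (m + 1)) := by
  have d1 := qtLucas_decomp q t (m + 2)
  have d2 := qtLucas_decomp q t (m + 1)
  have d3 := qtLucas_decomp q t m
  have n1 : 2 * (m + 2) + 1 = 2 * m + 5 := by omega
  have n2 : 2 * (m + 2) = 2 * m + 4 := by omega
  have n3 : 2 * (m + 1) + 1 = 2 * m + 3 := by omega
  have n4 : 2 * (m + 1) = 2 * m + 2 := by omega
  have n5 : m + 2 + 1 = m + 3 := by omega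
  have n6 : m + 1 + 1 = m + 2 := by omega
  rw [show (2 : ℕ) * (m + 2 + 1) = 2 * (m + 3) by omega, n1, n2, n5] at d1
  rw [show (2 : ℕ) * (m + 1 + 1) = 2 * (m + 2) by omega, n3, n4, n6] at d2
  have hA := A_rec q t m
  have hB := B_rec q t m
  linear_combination d1 + hA + q * hB - (1 + q + t) * d2 + q * d3

lemma L_one : qtLucas q t 2 = 1 + q + t := by
  have := qtLucas_decomp q t 0
  norm_num at this
  rw [this]
  have h1 : F q t 1 1 1 = t + 1 := by
    unfold F
    have hs : (Finset.Icc 1 1).powerset.filter (fun S => ∀ x ∈ S, (x + 1) ∉ S)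
        = {∅, {1}} := by decide
    rw [hs]
    rw [Finset.sum_insert (by decide), Finset.sum_singleton]
    have c1 : ((∅ : Finset ℕ).filter (fun x => Even x)).card = 0 := by decide
    have c2 : (({1} : Finset ℕ).filter (fun x => Even x)).card = 0 := by decide
    rw [c1, c2]
    norm_num
  have h2 : F q t 2 0 0 = 1 := by
    unfold F
    have hs : (Finset.Icc 2 0).powerset.filter (fun S => ∀ x ∈ S, (x + 1) ∉ S)
        = {∅} := by decide
    rw [hs, Finset.sum_singleton]
    norm_num
  rw [h1, h2]
  ring

lemma L_two : qtLucas q t 4 = (1 + q + t) ^ 2 - 2 * q := by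
  have hd := qtLucas_decomp q t 1
  norm_num at hd
  rw [hd]
  have h1 : F q t 1 3 2 = t ^ 2 + 2 * t + q * t + 1 := by
    unfold F
    have hs : (Finset.Icc 1 3).powerset.filter (fun S => ∀ x ∈ S, (x + 1) ∉ S)
        = {∅, {1}, {2}, {3}, {1, 3}} := by decide
    rw [hs]
    rw [Finset.sum_insert (by decide), Finset.sum_insert (by decide),
      Finset.sum_insert (by decide), Finset.sum_insert (by decide), Finset.sum_singleton]
    have c1 : ((∅ : Finset ℕ).filter (fun x => Even x)).card = 0 := by decide
    have c2 : (({1} : Finset ℕ).filter (fun x => Even x)).card = 0 := by decide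
    have c3 : (({2} : Finset ℕ).filter (fun x => Even x)).card = 1 := by decide
    have c4 : (({3} : Finset ℕ).filter (fun x => Even x)).card = 0 := by decide
    have c5 : (({1, 3} : Finset ℕ).filter (fun x => Even x)).card = 0 := by decide
    rw [c1, c2, c3, c4, c5]
    norm_num
    ring
  have h2 : F q t 2 2 1 = t + q := by
    unfold F
    have hs : (Finset.Icc 2 2).powerset.filter (fun S => ∀ x ∈ S, (x + 1) ∉ S)
        = {∅, {2}} := by decide
    rw [hs]
    rw [Finset.sum_insert (by decide), Finset.sum_singleton]
    have c1 : ((∅ : Finset ℕ).filter (fun x => Even x)).card = 0 := by decide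
    have c2 : (({2} : Finset ℕ).filter (fun x => Even x)).card = 1 := by decide
    rw [c1, c2]
    norm_num
  rw [h1, h2]
  ring

end QtLucasAux

theorem Nk_eq_qtLucas {R : Type*} [CommRing R] (q N₁ α₁ α₂ : R)
    (hs : α₁ + α₂ = 1 + q - N₁) (hp : α₁ * α₂ = q) (k : ℕ) (hk : 1 ≤ k) :
    1 + q ^ k - (1 + q ^ k - α₁ ^ k - α₂ ^ k) = qtLucas q (-N₁) (2 * k) := by
  set t : R := -N₁ with ht
  have hst : α₁ + α₂ = 1 + q + t := by rw [hs, ht]; ring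
  have key : ∀ j : ℕ,
      (α₁ ^ (j + 1) + α₂ ^ (j + 1) = qtLucas q t (2 * (j + 1))) ∧
      (α₁ ^ (j + 2) + α₂ ^ (j + 2) = qtLucas q t (2 * (j + 2))) := by
    intro j
    induction j with
    | zero =>
      constructor
      · have h1 : qtLucas q t (2 * 1) = 1 + q + t := by
          norm_num [QtLucasAux.L_one q t]
        rw [h1]
        simpa using hst
      · have h2 : qtLucas q t (2 * 2) = (1 + q + t) ^ 2 - 2 * q := by
          norm_num [QtLucasAux.L_two q t]
        rw [h2]
        linear_combination (α₁ + α₂ + 1 + q + t) * hst - 2 * hp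
    | succ n ih =>
      refine ⟨ih.2, ?_⟩
      have hL := QtLucasAux.L_rec q t n
      have halg : α₁ ^ (n + 3) + α₂ ^ (n + 3)
          = (α₁ + α₂) * (α₁ ^ (n + 2) + α₂ ^ (n + 2))
            - (α₁ * α₂) * (α₁ ^ (n + 1) + α₂ ^ (n + 1)) := by ring
      have hn3 : n + 1 + 2 = n + 3 := by omega
      rw [hn3, halg, hst, hp, ih.1, ih.2, hL]
  obtain ⟨j, rfl⟩ : ∃ j, k = j + 1 := ⟨k - 1, by omega⟩
  have := (key j).1
  linear_combination this
end

section
/- Define the (q,t)-Fibonacci polynomial F_k(q,t) = Σ_S q^{# even elements of S} t^{⌈k/2⌉ − #S}, summed over subsets S of {1,…,k−1} with no two consecutive elements. Then F_{2n+1}(q,t) = (1+q+t)·F_{2n−1}(q,t) − q·F_{2n−3}(q,t) for all n ≥ 2. -/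
private def P (m : ℕ) : Finset (Finset ℕ) :=
  (Finset.Icc 1 m).powerset.filter (fun S => ∀ x ∈ S, x + 1 ∉ S)

private lemma mem_P {m : ℕ} {S : Finset ℕ} :
    S ∈ P m ↔ S ⊆ Finset.Icc 1 m ∧ ∀ x ∈ S, x + 1 ∉ S := by
  simp [P]

private lemma not_top_mem {m : ℕ} {S : Finset ℕ} (h : S ∈ P m) {x : ℕ} (hx : m < x) :
    x ∉ S := by
  intro hxS
  have := (mem_P.mp h).1 hxS
  simp only [Finset.mem_Icc] at this
  omega

private lemma card_le_of_mem_P {m : ℕ} {S : Finset ℕ} (h : S ∈ P m) :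
    S.card ≤ (m + 1) / 2 := by
  rw [mem_P] at h
  obtain ⟨hsub, hcons⟩ := h
  have key : S.card ≤ (Finset.Icc 1 ((m + 1) / 2)).card := by
    apply Finset.card_le_card_of_injOn (fun x => (x + 1) / 2)
    · intro x hx
      have hx' := hsub hx
      simp only [Finset.mem_coe, Finset.mem_Icc] at hx' ⊢
      omega
    · intro x hx y hy hxy
      simp only [Finset.mem_coe] at hx hy
      simp only at hxy
      by_contra hne
      rcases Nat.lt_or_ge x y with h1 | h1
      · have hy1 : y = x + 1 := by omega
        exact hcons x hx (hy1 ▸ hy)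
      · have hx1 : x = y + 1 := by omega
        exact hcons y hy (hx1 ▸ hx)
  simpa using key

private lemma P_split (k : ℕ) :
    P (k + 2) = P (k + 1) ∪ (P k).image (insert (k + 2)) := by
  ext S
  simp only [Finset.mem_union, Finset.mem_image, mem_P]
  constructor
  · rintro ⟨hsub, hcons⟩
    by_cases htop : k + 2 ∈ S
    · right
      refine ⟨S.erase (k + 2), ⟨?_, ?_⟩, Finset.insert_erase htop⟩
      · intro x hx
        have hx' := Finset.mem_of_mem_erase hx
        have h1 := hsub hx'
        have h2 : x ≠ k + 2 := Finset.ne_of_mem_erase hx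
        have h3 : x ≠ k + 1 := by
          intro h
          exact hcons x hx' (by rw [h]; exact htop)
        simp only [Finset.mem_Icc] at h1 ⊢
        omega
      · exact fun x hx hx1 =>
          hcons x (Finset.mem_of_mem_erase hx) (Finset.mem_of_mem_erase hx1)
    · left
      refine ⟨fun x hx => ?_, hcons⟩
      have h1 := hsub hx
      have h2 : x ≠ k + 2 := fun h => htop (h ▸ hx)
      simp only [Finset.mem_Icc] at h1 ⊢
      omega
  · rintro (⟨hsub, hcons⟩ | ⟨S', ⟨hsub, hcons⟩, rfl⟩)
    · refine ⟨fun x hx => ?_, hcons⟩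
      have := hsub hx
      simp only [Finset.mem_Icc] at this ⊢
      omega
    · constructor
      · intro x hx
        rcases Finset.mem_insert.mp hx with rfl | hx'
        · simp only [Finset.mem_Icc]; omega
        · have := hsub hx'
          simp only [Finset.mem_Icc] at this ⊢
          omega
      · intro x hx hx1
        rcases Finset.mem_insert.mp hx with rfl | hx'
        · rcases Finset.mem_insert.mp hx1 with h | h
          · omega
          · have := hsub h
            simp only [Finset.mem_Icc] at this
            omega
        · rcases Finset.mem_insert.mp hx1 with h | h
          · have := hsub hx'
            simp only [Finset.mem_Icc] at this
            omega
          · exact hcons x hx' h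

private lemma sum_P_split {R : Type*} [CommRing R] (q t : R) (k e : ℕ) :
    ∑ S ∈ P (k + 2), q ^ (S.filter (fun x => Even x)).card * t ^ (e + 1 - S.card)
      = ∑ S ∈ P (k + 1), q ^ (S.filter (fun x => Even x)).card * t ^ (e + 1 - S.card)
        + (if Even k then q else 1) *
          ∑ S ∈ P k, q ^ (S.filter (fun x => Even x)).card * t ^ (e - S.card) := by
  have hpar : Even (k + 2) ↔ Even k := by simp [Nat.even_add]
  have hdisj : Disjoint (P (k + 1)) ((P k).image (insert (k + 2))) := by
    rw [Finset.disjoint_left]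
    intro S hS hS'
    simp only [Finset.mem_image] at hS'
    obtain ⟨S', _, rfl⟩ := hS'
    exact not_top_mem hS (by omega) (Finset.mem_insert_self _ _)
  have hinj : ∀ a ∈ P k, ∀ b ∈ P k, insert (k + 2) a = insert (k + 2) b → a = b := by
    intro a ha b hb hab
    have ha' : k + 2 ∉ a := not_top_mem ha (by omega)
    have hb' : k + 2 ∉ b := not_top_mem hb (by omega)
    rw [← Finset.erase_insert ha', ← Finset.erase_insert hb', hab]
  rw [P_split, Finset.sum_union hdisj, Finset.sum_image hinj]
  congr 1
  rw [Finset.mul_sum]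
  refine Finset.sum_congr rfl fun S hS => ?_
  have htop : k + 2 ∉ S := not_top_mem hS (by omega)
  have hcard : (insert (k + 2) S).card = S.card + 1 := Finset.card_insert_of_notMem htop
  have hfil : ((insert (k + 2) S).filter (fun x => Even x)).card
      = (S.filter (fun x => Even x)).card + (if Even k then 1 else 0) := by
    rw [Finset.filter_insert]
    by_cases h : Even k
    · rw [if_pos (hpar.mpr h), if_pos h,
        Finset.card_insert_of_notMem (fun hc => htop (Finset.mem_filter.mp hc).1)]
    · rw [if_neg (fun hc => h (hpar.mp hc)), if_neg h, Nat.add_zero]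
  rw [hcard, hfil]
  have hsub : e + 1 - (S.card + 1) = e - S.card := by omega
  rw [hsub]
  by_cases h : Even k
  · rw [if_pos h, if_pos h, pow_succ]
    ring
  · rw [if_neg h, if_neg h]
    ring

private lemma sum_P_shift {R : Type*} [CommRing R] (q t : R) (m e : ℕ)
    (he : (m + 1) / 2 ≤ e) :
    ∑ S ∈ P m, q ^ (S.filter (fun x => Even x)).card * t ^ (e + 1 - S.card)
      = t * ∑ S ∈ P m, q ^ (S.filter (fun x => Even x)).card * t ^ (e - S.card) := by
  rw [Finset.mul_sum]
  refine Finset.sum_congr rfl fun S hS => ?_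
  have hc := card_le_of_mem_P hS
  have h1 : e + 1 - S.card = (e - S.card) + 1 := by omega
  rw [h1, pow_succ]
  ring

/-- The (q,t)-Fibonacci polynomial: sum over subsets `S ⊆ {1,…,k-1}` with no two
consecutive elements, weighted by `q^(# even elements of S) * t^(⌈k/2⌉ - #S)`. -/
def qtFib {R : Type*} [CommRing R] (q t : R) (k : ℕ) : R :=
  ∑ S ∈ (Finset.Icc 1 (k - 1)).powerset.filter (fun S => ∀ x ∈ S, x + 1 ∉ S),
    q ^ (S.filter (fun x => Even x)).card * t ^ ((k + 1) / 2 - S.card)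

private lemma qtFib_succ {R : Type*} [CommRing R] (q t : R) (j e : ℕ)
    (he : (j + 2) / 2 = e) :
    qtFib q t (j + 1)
      = ∑ S ∈ P j, q ^ (S.filter (fun x => Even x)).card * t ^ (e - S.card) := by
  subst he; rfl

private lemma qtFib_even_step {R : Type*} [CommRing R] (q t : R) (m : ℕ) :
    qtFib q t (2*m + 4) = qtFib q t (2*m + 3) + qtFib q t (2*m + 2) := by
  have h0 := qtFib_succ q t (2*m + 3) (m + 2) (by omega)
  have h1 := qtFib_succ q t (2*m + 2) (m + 2) (by omega)
  have h2 := qtFib_succ q t (2*m + 1) (m + 1) (by omega)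
  rw [h0, h1, h2]
  have hodd : ¬ Even (2*m + 1) :=
    Nat.not_even_iff_odd.mpr (Nat.odd_iff.mpr (by omega))
  have hsplit := sum_P_split q t (2*m + 1) (m + 1)
  rw [if_neg hodd, one_mul] at hsplit
  exact hsplit

private lemma qtFib_odd_step {R : Type*} [CommRing R] (q t : R) (m : ℕ) :
    qtFib q t (2*m + 3) = t * qtFib q t (2*m + 2) + q * qtFib q t (2*m + 1) := by
  have h0 := qtFib_succ q t (2*m + 2) (m + 2) (by omega)
  have h1 := qtFib_succ q t (2*m + 1) (m + 1) (by omega)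
  have h2 := qtFib_succ q t (2*m) (m + 1) (by omega)
  rw [h0, h1, h2]
  have heven : Even (2*m) := Nat.even_iff.mpr (by omega)
  have hsplit := sum_P_split q t (2*m) (m + 1)
  rw [if_pos heven] at hsplit
  have hshift := sum_P_shift q t (2*m + 1) (m + 1) (by omega)
  rw [hshift] at hsplit
  exact hsplit

theorem qtFib_recurrence {R : Type*} [CommRing R] (q t : R) (n : ℕ) (hn : 2 ≤ n) :
    qtFib q t (2 * n + 1) =
      (1 + q + t) * qtFib q t (2 * n - 1) - q * qtFib q t (2 * n - 3) := by
  obtain ⟨j, rfl⟩ : ∃ j, n = j + 2 := ⟨n - 2, by omega⟩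
  rw [show 2 * (j + 2) + 1 = 2*j + 5 from by ring,
      show 2 * (j + 2) - 1 = 2*j + 3 from by omega,
      show 2 * (j + 2) - 3 = 2*j + 1 from by omega]
  have h1 : qtFib q t (2*j + 5) = t * qtFib q t (2*j + 4) + q * qtFib q t (2*j + 3) := by
    have h := qtFib_odd_step q t (j + 1)
    rw [show 2 * (j + 1) + 3 = 2*j + 5 from by ring,
        show 2 * (j + 1) + 2 = 2*j + 4 from by ring,
        show 2 * (j + 1) + 1 = 2*j + 3 from by ring] at h
    exact h
  have h2 := qtFib_even_step q t j
  have h3 := qtFib_odd_step q t j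
  linear_combination h1 + t * h2 - h3
end

section
/- For all k ≥ 1, N_k = Σ_{i=1}^{k} (−1)^{i−1} P_{i,k}(q) N₁^i where each P_{i,k}(q) is a polynomial in q with nonnegative integer coefficients (in fact positive), where N_k = 1 + q^k − α₁^k − α₂^k with α₁+α₂ = 1+q−N₁ and α₁α₂ = q. -/
/-- Power sums `s k = α₁^k + α₂^k` of the roots of `X² - (1+q-N₁)X + q`, as elements of
`ℤ[q][N₁]` (outer variable is `N₁`, inner variable is `q`), via Newton's recurrence. -/
noncomputable def powerSumQN : ℕ → Polynomial (Polynomial ℤ)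
  | 0 => 2
  | 1 => 1 + Polynomial.C Polynomial.X - Polynomial.X
  | k + 2 =>
      (1 + Polynomial.C Polynomial.X - Polynomial.X) * powerSumQN (k + 1)
        - Polynomial.C Polynomial.X * powerSumQN k

/-- `N_k = 1 + q^k - α₁^k - α₂^k ∈ ℤ[q][N₁]`. -/
noncomputable def NkQN (k : ℕ) : Polynomial (Polynomial ℤ) :=
  1 + Polynomial.C (Polynomial.X ^ k) - powerSumQN k

open Polynomial in
/-- The pair `(T_k, U_{k+1})` where `T_k(N) = -N_k(-N)` and `U_{k+1} = T_{k+1} - T_k`. -/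
noncomputable def tuQ : ℕ → Polynomial (Polynomial ℤ) × Polynomial (Polynomial ℤ)
  | 0 => (0, X)
  | k + 1 =>
      ((tuQ k).1 + (tuQ k).2,
        C X * (tuQ k).2 + C (1 + X ^ (k + 1)) * X + X * ((tuQ k).1 + (tuQ k).2))

/-- `T_k(N) = -N_k(-N)`. -/
noncomputable def tQ (k : ℕ) : Polynomial (Polynomial ℤ) := (tuQ k).1

/-- `U_{k+1} = T_{k+1} - T_k`. -/
noncomputable def uQ (k : ℕ) : Polynomial (Polynomial ℤ) := (tuQ k).2

open Polynomial Finset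

lemma tQ_zero : tQ 0 = 0 := rfl

lemma uQ_zero : uQ 0 = X := rfl

lemma tQ_succ (k : ℕ) : tQ (k + 1) = tQ k + uQ k := by
  simp [tQ, uQ, tuQ]

lemma uQ_succ (k : ℕ) :
    uQ (k + 1) = C X * uQ k + C (1 + X ^ (k + 1)) * X + X * tQ (k + 1) := by
  simp [tQ, uQ, tuQ]

/-- Nonnegativity of all coefficients of an integer polynomial. -/
def In (p : Polynomial ℤ) : Prop := ∀ n, 0 ≤ p.coeff n

lemma In.add {p q : Polynomial ℤ} (hp : In p) (hq : In q) : In (p + q) := fun n => by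
  rw [coeff_add]; exact add_nonneg (hp n) (hq n)

lemma In_sum {α : Type*} {s : Finset α} {f : α → Polynomial ℤ}
    (h : ∀ a ∈ s, In (f a)) : In (∑ a ∈ s, f a) := fun n => by
  rw [finset_sum_coeff]
  exact Finset.sum_nonneg fun a ha => h a ha n

lemma In.mul {p q : Polynomial ℤ} (hp : In p) (hq : In q) : In (p * q) := fun n => by
  rw [coeff_mul]
  exact Finset.sum_nonneg fun x _ => mul_nonneg (hp _) (hq _)

lemma In_X : In (X : Polynomial ℤ) := fun n => by
  rw [coeff_X]; split <;> norm_num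

lemma In_one : In (1 : Polynomial ℤ) := fun n => by
  rw [coeff_one]; split <;> norm_num

lemma In_X_pow (m : ℕ) : In ((X : Polynomial ℤ) ^ m) := fun n => by
  rw [coeff_X_pow]; split <;> norm_num

/-- Nonnegativity of all coefficients of an element of `ℤ[q][N₁]`. -/
def Nn (p : Polynomial (Polynomial ℤ)) : Prop := ∀ i, In (p.coeff i)

lemma Nn.add {p q : Polynomial (Polynomial ℤ)} (hp : Nn p) (hq : Nn q) : Nn (p + q) := fun i => by
  rw [coeff_add]; exact (hp i).add (hq i)

lemma Nn.mul {p q : Polynomial (Polynomial ℤ)} (hp : Nn p) (hq : Nn q) : Nn (p * q) := fun i => by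
  rw [coeff_mul]
  exact In_sum fun x _ => (hp _).mul (hq _)

lemma Nn_C {a : Polynomial ℤ} (h : In a) : Nn (C a) := fun i => by
  rw [coeff_C]
  split
  · exact h
  · intro n; simp

lemma Nn_X : Nn (X : Polynomial (Polynomial ℤ)) := fun i => by
  rw [coeff_X]
  split
  · exact In_one
  · intro n; simp

lemma Nn_uQ_tQ : ∀ k, Nn (uQ k) ∧ Nn (tQ k) := by
  intro k
  induction k with
  | zero =>
    constructor
    · rw [uQ_zero]; exact Nn_X
    · rw [tQ_zero]; intro i n; simp
  | succ k ih =>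
    have ht : Nn (tQ (k + 1)) := by
      rw [tQ_succ]; exact ih.2.add ih.1
    refine ⟨?_, ht⟩
    rw [uQ_succ]
    exact (((Nn_C In_X).mul ih.1).add
      ((Nn_C (In_one.add (In_X_pow (k + 1)))).mul Nn_X)).add (Nn_X.mul ht)

lemma Nn_tQ (k : ℕ) : Nn (tQ k) := (Nn_uQ_tQ k).2

lemma uQ_tQ_coeff_zero : ∀ k, (uQ k).coeff 0 = 0 ∧ (tQ k).coeff 0 = 0 := by
  intro k
  induction k with
  | zero => constructor <;> simp [uQ_zero, tQ_zero]
  | succ k ih =>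
    have ht : (tQ (k + 1)).coeff 0 = 0 := by
      rw [tQ_succ, coeff_add, ih.1, ih.2]; ring
    refine ⟨?_, ht⟩
    rw [uQ_succ]
    simp [mul_coeff_zero, ih.1, ht]

lemma uQ_tQ_natDegree : ∀ k, (uQ k).natDegree ≤ k + 1 ∧ (tQ k).natDegree ≤ k := by
  intro k
  induction k with
  | zero =>
    constructor
    · rw [uQ_zero]; exact natDegree_X_le
    · rw [tQ_zero]; simp
  | succ k ih =>
    have ht : (tQ (k + 1)).natDegree ≤ k + 1 := by
      rw [tQ_succ]
      exact natDegree_add_le_of_degree_le (ih.2.trans (by omega)) ih.1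
    refine ⟨?_, ht⟩
    rw [uQ_succ]
    refine natDegree_add_le_of_degree_le (natDegree_add_le_of_degree_le ?_ ?_) ?_
    · refine natDegree_mul_le.trans ?_
      have := ih.1
      simp only [natDegree_C]
      omega
    · refine natDegree_mul_le.trans ?_
      have := natDegree_X_le (R := Polynomial ℤ)
      simp only [natDegree_C]
      omega
    · refine natDegree_mul_le.trans ?_
      have := natDegree_X_le (R := Polynomial ℤ)
      omega

lemma powerSumQN_comp : ∀ k, (powerSumQN k).comp (-X) = 1 + C (X ^ k) + tQ k := by
  intro k
  induction k using Nat.strong_induction_on with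
  | _ k ih =>
    match k with
    | 0 =>
      rw [powerSumQN, tQ_zero]
      norm_num
    | 1 =>
      have h1 : tQ 1 = X := by rw [tQ_succ, tQ_zero, uQ_zero, zero_add]
      rw [powerSumQN, h1]
      simp only [sub_comp, add_comp, one_comp, C_comp, X_comp, pow_one]
      ring
    | k + 2 =>
      have ih1 := ih (k + 1) (by omega)
      have ih0 := ih k (by omega)
      have hu : uQ k = tQ (k + 1) - tQ k := by rw [tQ_succ]; ring
      rw [powerSumQN]
      simp only [sub_comp, mul_comp, add_comp, one_comp, C_comp, X_comp, ih1, ih0]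
      rw [tQ_succ (k + 1), uQ_succ, hu]
      simp only [map_pow, map_add, map_one]
      ring

lemma powerSumQN_eq (k : ℕ) :
    powerSumQN k = 1 + C (X ^ k) + (tQ k).comp (-X) := by
  have h1 : ((powerSumQN k).comp (-X)).comp (-X) = powerSumQN k := by
    rw [comp_assoc]
    simp [neg_comp]
  rw [← h1, powerSumQN_comp]
  simp [add_comp, one_comp, C_comp]

lemma tQ_as_sum (k : ℕ) :
    tQ k = ∑ i ∈ Finset.Icc 1 k, C ((tQ k).coeff i) * X ^ i := by
  have h1 : tQ k = ∑ i ∈ Finset.range (k + 1), C ((tQ k).coeff i) * X ^ i := by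
    conv_lhs => rw [(tQ k).as_sum_range' (k + 1) (Nat.lt_succ_of_le (uQ_tQ_natDegree k).2)]
    exact Finset.sum_congr rfl fun i _ => C_mul_X_pow_eq_monomial.symm
  have h2 : ∑ i ∈ Finset.Icc 1 k, C ((tQ k).coeff i) * X ^ i
      = ∑ i ∈ Finset.range (k + 1), C ((tQ k).coeff i) * X ^ i := by
    refine Finset.sum_subset (fun i hi => ?_) (fun i hi hni => ?_)
    · simp only [Finset.mem_Icc] at hi
      simp only [Finset.mem_range]
      omega
    · simp only [Finset.mem_range] at hi
      simp only [Finset.mem_Icc] at hni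
      have : i = 0 := by omega
      subst this
      rw [(uQ_tQ_coeff_zero k).2]
      simp
  rw [h2]; exact h1

theorem Nk_alternating (k : ℕ) (hk : 1 ≤ k) :
    ∃ P : ℕ → Polynomial ℤ,
      (∀ i ∈ Finset.Icc 1 k, ∀ n : ℕ, 0 ≤ (P i).coeff n) ∧
      NkQN k = ∑ i ∈ Finset.Icc 1 k,
        (-1 : Polynomial (Polynomial ℤ)) ^ (i - 1) * Polynomial.C (P i) * Polynomial.X ^ i := by
  refine ⟨fun i => (tQ k).coeff i, fun i _ n => Nn_tQ k i n, ?_⟩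
  have hN : NkQN k = -(tQ k).comp (-X) := by
    rw [NkQN, powerSumQN_eq]
    ring
  rw [hN]
  conv_lhs => rw [tQ_as_sum k]
  have hcomp : ((∑ i ∈ Finset.Icc 1 k, C ((tQ k).coeff i) * X ^ i).comp (-X))
      = ∑ i ∈ Finset.Icc 1 k, C ((tQ k).coeff i) * (-X) ^ i := by
    simp [Polynomial.comp, eval₂_finset_sum]
  rw [hcomp, ← Finset.sum_neg_distrib]
  refine Finset.sum_congr rfl fun i hi => ?_
  simp only [Finset.mem_Icc] at hi
  obtain ⟨j, rfl⟩ : ∃ j, i = j + 1 := ⟨i - 1, by omega⟩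
  have hx : (-X : Polynomial (Polynomial ℤ)) ^ (j + 1) = (-1) ^ (j + 1) * X ^ (j + 1) := by
    ring
  rw [hx]
  simp only [Nat.add_sub_cancel]
  rw [pow_succ]
  ring
end

section
/- For k ≥ 1 and 1 ≤ i ≤ k, the number of subsets S of {1,…,2k−2} with exactly k−i−j odd elements and j even elements and no two consecutive elements is C(k−1−j, i−1)·C(i+j−1, j), i.e. the number of subsets of {1,…,2n} with a odd elements, b even elements, and no two consecutive elements equals C(n−b, a)·C(n−a, b). -/
open Finset

abbrev GP (a b : ℕ) (S : Finset ℕ) : Prop :=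
  (∀ x ∈ S, x + 1 ∉ S) ∧
  (S.filter (fun x => ¬ Even x)).card = a ∧
  (S.filter (fun x => Even x)).card = b

def cnt (k a b : ℕ) : ℕ :=
  ((Finset.Icc 1 k).powerset.filter (GP a b)).card

lemma filter_not_top (k a b : ℕ) :
    (((Finset.Icc 1 (k+1)).powerset.filter (GP a b)).filter (fun S => ¬ (k+1 ∈ S))) =
    ((Finset.Icc 1 k).powerset.filter (GP a b)) := by
  ext S
  simp only [mem_filter, mem_powerset]
  constructor
  · rintro ⟨⟨hsub, hp⟩, htop⟩
    refine ⟨fun x hx => ?_, hp⟩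
    have h1 := hsub hx
    have h2 : x ≠ k+1 := fun h => htop (h ▸ hx)
    simp only [mem_Icc] at h1 ⊢
    omega
  · rintro ⟨hsub, hp⟩
    have htop : k+1 ∉ S := fun h => by
      have := hsub h; simp only [mem_Icc] at this; omega
    refine ⟨⟨fun x hx => ?_, hp⟩, htop⟩
    have := hsub hx
    simp only [mem_Icc] at this ⊢
    omega

lemma part2_even (k a b : ℕ) (hk : Even (k+1)) :
    (((Finset.Icc 1 (k+1)).powerset.filter (GP a (b+1))).filter (fun S => k+1 ∈ S)).card
      = cnt (k-1) a b := by
  have hne : ¬ (¬ Even (k+1)) := fun h => h hk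
  rw [cnt]
  apply Finset.card_nbij' (fun S => S.erase (k+1)) (fun T => insert (k+1) T)
  · rintro S hS
    simp only [Finset.mem_coe, mem_filter, mem_powerset] at hS ⊢
    obtain ⟨⟨hsub, hcons, hodd, heven⟩, htop⟩ := hS
    have hknot : k ∉ S := fun hkS => hcons k hkS htop
    refine ⟨fun x hx => ?_, fun x hx => ?_, ?_, ?_⟩
    · have hx1 : x ∈ S := mem_of_mem_erase hx
      have hx2 : x ≠ k+1 := ne_of_mem_erase hx
      have hx3 : x ≠ k := fun h => hknot (h ▸ hx1)
      have := hsub hx1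
      simp only [mem_Icc] at this ⊢
      omega
    · intro hx1
      exact hcons x (mem_of_mem_erase hx) (mem_of_mem_erase hx1)
    · rw [Finset.filter_erase, Finset.erase_eq_of_notMem (by simp [hk]), hodd]
    · rw [Finset.filter_erase, Finset.card_erase_of_mem (by simp [hk, htop]), heven]
      omega
  · rintro T hT
    simp only [Finset.mem_coe, mem_filter, mem_powerset] at hT ⊢
    obtain ⟨hsub, hcons, hodd, heven⟩ := hT
    have hknotT : k+1 ∉ T := fun h => by
      have := hsub h; simp only [mem_Icc] at this; omega
    refine ⟨⟨fun x hx => ?_, fun x hx => ?_, ?_, ?_⟩, mem_insert_self _ _⟩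
    · rcases mem_insert.mp hx with h | h
      · simp only [mem_Icc]; omega
      · have := hsub h; simp only [mem_Icc] at this ⊢; omega
    · intro hx1
      rcases mem_insert.mp hx with h | h
      · subst h
        rcases mem_insert.mp hx1 with h1 | h1
        · omega
        · have := hsub h1; simp only [mem_Icc] at this; omega
      · rcases mem_insert.mp hx1 with h1 | h1
        · have := hsub h; simp only [mem_Icc] at this; omega
        · exact hcons x h h1
    · rw [Finset.filter_insert, if_neg hne, hodd]
    · rw [Finset.filter_insert, if_pos hk,
        Finset.card_insert_of_notMem (fun h => hknotT (Finset.mem_of_mem_filter _ h)), heven]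
  · rintro S hS
    simp only [Finset.mem_coe, mem_filter] at hS
    exact Finset.insert_erase hS.2
  · rintro T hT
    simp only [Finset.mem_coe, mem_filter, mem_powerset] at hT
    have hknotT : k+1 ∉ T := fun h => by
      have := hT.1 h; simp only [mem_Icc] at this; omega
    exact Finset.erase_insert hknotT

lemma part2_odd (k a b : ℕ) (hk : ¬ Even (k+1)) :
    (((Finset.Icc 1 (k+1)).powerset.filter (GP (a+1) b)).filter (fun S => k+1 ∈ S)).card
      = cnt (k-1) a b := by
  rw [cnt]
  apply Finset.card_nbij' (fun S => S.erase (k+1)) (fun T => insert (k+1) T)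
  · rintro S hS
    simp only [Finset.mem_coe, mem_filter, mem_powerset] at hS ⊢
    obtain ⟨⟨hsub, hcons, hodd, heven⟩, htop⟩ := hS
    have hknot : k ∉ S := fun hkS => hcons k hkS htop
    refine ⟨fun x hx => ?_, fun x hx => ?_, ?_, ?_⟩
    · have hx1 : x ∈ S := mem_of_mem_erase hx
      have hx2 : x ≠ k+1 := ne_of_mem_erase hx
      have hx3 : x ≠ k := fun h => hknot (h ▸ hx1)
      have := hsub hx1
      simp only [mem_Icc] at this ⊢
      omega
    · intro hx1
      exact hcons x (mem_of_mem_erase hx) (mem_of_mem_erase hx1)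
    · rw [Finset.filter_erase, Finset.card_erase_of_mem (mem_filter.mpr ⟨htop, hk⟩), hodd]
      omega
    · rw [Finset.filter_erase,
        Finset.erase_eq_of_notMem (fun h => hk (mem_filter.mp h).2), heven]
  · rintro T hT
    simp only [Finset.mem_coe, mem_filter, mem_powerset] at hT ⊢
    obtain ⟨hsub, hcons, hodd, heven⟩ := hT
    have hknotT : k+1 ∉ T := fun h => by
      have := hsub h; simp only [mem_Icc] at this; omega
    refine ⟨⟨fun x hx => ?_, fun x hx => ?_, ?_, ?_⟩, mem_insert_self _ _⟩
    · rcases mem_insert.mp hx with h | h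
      · simp only [mem_Icc]; omega
      · have := hsub h; simp only [mem_Icc] at this ⊢; omega
    · intro hx1
      rcases mem_insert.mp hx with h | h
      · subst h
        rcases mem_insert.mp hx1 with h1 | h1
        · omega
        · have := hsub h1; simp only [mem_Icc] at this; omega
      · rcases mem_insert.mp hx1 with h1 | h1
        · have := hsub h; simp only [mem_Icc] at this; omega
        · exact hcons x h h1
    · rw [Finset.filter_insert, if_pos hk,
        Finset.card_insert_of_notMem (fun h => hknotT (Finset.mem_of_mem_filter _ h)), hodd]
    · rw [Finset.filter_insert, if_neg (fun h => hk h), heven]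
  · rintro S hS
    simp only [Finset.mem_coe, mem_filter] at hS
    exact Finset.insert_erase hS.2
  · rintro T hT
    simp only [Finset.mem_coe, mem_filter, mem_powerset] at hT
    have hknotT : k+1 ∉ T := fun h => by
      have := hT.1 h; simp only [mem_Icc] at this; omega
    exact Finset.erase_insert hknotT

lemma part2_even0 (k a : ℕ) (hk : Even (k+1)) :
    (((Finset.Icc 1 (k+1)).powerset.filter (GP a 0)).filter (fun S => k+1 ∈ S)).card = 0 := by
  rw [Finset.card_eq_zero, Finset.eq_empty_iff_forall_notMem]
  rintro S hS
  simp only [mem_filter, mem_powerset] at hS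
  obtain ⟨⟨hsub, hcons, hodd, heven⟩, htop⟩ := hS
  have hmem : k+1 ∈ S.filter (fun x => Even x) := mem_filter.mpr ⟨htop, hk⟩
  rw [Finset.card_eq_zero] at heven
  rw [heven] at hmem
  exact absurd hmem (Finset.notMem_empty _)

lemma part2_odd0 (k b : ℕ) (hk : ¬ Even (k+1)) :
    (((Finset.Icc 1 (k+1)).powerset.filter (GP 0 b)).filter (fun S => k+1 ∈ S)).card = 0 := by
  rw [Finset.card_eq_zero, Finset.eq_empty_iff_forall_notMem]
  rintro S hS
  simp only [mem_filter, mem_powerset] at hS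
  obtain ⟨⟨hsub, hcons, hodd, heven⟩, htop⟩ := hS
  have hmem : k+1 ∈ S.filter (fun x => ¬ Even x) := mem_filter.mpr ⟨htop, hk⟩
  rw [Finset.card_eq_zero] at hodd
  rw [hodd] at hmem
  exact absurd hmem (Finset.notMem_empty _)

lemma cnt_succ_even (k a b : ℕ) (hk : Even (k+1)) :
    cnt (k+1) a (b+1) = cnt k a (b+1) + cnt (k-1) a b := by
  rw [show cnt (k+1) a (b+1) =
      ((Finset.Icc 1 (k+1)).powerset.filter (GP a (b+1))).card from rfl]
  rw [← Finset.card_filter_add_card_filter_not (p := fun S => k+1 ∈ S)]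
  rw [part2_even k a b hk, filter_not_top]
  rw [show ((Finset.Icc 1 k).powerset.filter (GP a (b+1))).card = cnt k a (b+1) from rfl]
  omega

lemma cnt_succ_even0 (k a : ℕ) (hk : Even (k+1)) :
    cnt (k+1) a 0 = cnt k a 0 := by
  rw [show cnt (k+1) a 0 =
      ((Finset.Icc 1 (k+1)).powerset.filter (GP a 0)).card from rfl]
  rw [← Finset.card_filter_add_card_filter_not (p := fun S => k+1 ∈ S)]
  rw [part2_even0 k a hk, filter_not_top]
  rw [zero_add]
  rfl

lemma cnt_succ_odd (k a b : ℕ) (hk : ¬ Even (k+1)) :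
    cnt (k+1) (a+1) b = cnt k (a+1) b + cnt (k-1) a b := by
  rw [show cnt (k+1) (a+1) b =
      ((Finset.Icc 1 (k+1)).powerset.filter (GP (a+1) b)).card from rfl]
  rw [← Finset.card_filter_add_card_filter_not (p := fun S => k+1 ∈ S)]
  rw [part2_odd k a b hk, filter_not_top]
  rw [show ((Finset.Icc 1 k).powerset.filter (GP (a+1) b)).card = cnt k (a+1) b from rfl]
  omega

lemma cnt_succ_odd0 (k b : ℕ) (hk : ¬ Even (k+1)) :
    cnt (k+1) 0 b = cnt k 0 b := by
  rw [show cnt (k+1) 0 b =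
      ((Finset.Icc 1 (k+1)).powerset.filter (GP 0 b)).card from rfl]
  rw [← Finset.card_filter_add_card_filter_not (p := fun S => k+1 ∈ S)]
  rw [part2_odd0 k b hk, filter_not_top]
  rw [zero_add]
  rfl

lemma cnt_formula (k : ℕ) : ∀ a b, cnt k a b =
    Nat.choose ((k+1)/2 - b) a * Nat.choose (k/2 - a) b := by
  induction k using Nat.strong_induction_on with
  | _ k ih =>
    match k with
    | 0 =>
      intro a b
      have h0 : Finset.Icc 1 0 = (∅ : Finset ℕ) := by
        apply Finset.Icc_eq_empty; omega
      rw [cnt, h0]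
      rcases a with _ | a <;> rcases b with _ | b <;>
        simp [Finset.filter_singleton, Nat.choose, GP]
    | (k+1) =>
      intro a b
      rcases Nat.even_or_odd (k+1) with he | ho
      · obtain ⟨n, hn⟩ := he
        have hn1 : 1 ≤ n := by omega
        have e1 : ((k+1)+1)/2 = n := by omega
        have e2 : (k+1)/2 = n := by omega
        have e3 : k/2 = n - 1 := by omega
        have e4 : ((k-1)+1)/2 = n - 1 := by omega
        have e5 : (k-1)/2 = n - 1 := by omega
        have heven : Even (k+1) := ⟨n, hn⟩
        rcases b with _ | b
        · rw [cnt_succ_even0 k a heven, ih k (by omega) a 0, e1, e2, e3]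
          simp only [Nat.sub_zero, Nat.choose_zero_right, mul_one]
        · rw [cnt_succ_even k a b heven, ih k (by omega) a (b+1),
            ih (k-1) (by omega) a b, e1, e2, e3, e4, e5]
          have e6 : n - (b+1) = n - 1 - b := by omega
          rw [e6]
          by_cases ha : a < n
          · have e7 : n - a = (n - 1 - a) + 1 := by omega
            rw [e7, Nat.choose_succ_succ]
            ring
          · rw [Nat.choose_eq_zero_of_lt (show n - 1 - b < a by omega)]
            simp
      · obtain ⟨m, hm⟩ := ho
        have e1 : ((k+1)+1)/2 = m + 1 := by omega
        have e2 : (k+1)/2 = m := by omega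
        have e3 : k/2 = m := by omega
        have e4 : ((k-1)+1)/2 = m := by omega
        have e5 : (k-1)/2 = m - 1 := by omega
        have hodd : ¬ Even (k+1) := by
          rw [Nat.even_iff]; omega
        rcases a with _ | a
        · rw [cnt_succ_odd0 k b hodd, ih k (by omega) 0 b, e1, e2, e3]
          simp only [Nat.choose_zero_right, Nat.sub_zero, one_mul]
        · rw [cnt_succ_odd k a b hodd, ih k (by omega) (a+1) b,
            ih (k-1) (by omega) a b, e1, e2, e3, e4, e5]
          have e6 : m - (a+1) = m - 1 - a := by omega
          rw [e6]
          by_cases hb : b ≤ m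
          · have e7 : m + 1 - b = (m - b) + 1 := by omega
            rw [e7, Nat.choose_succ_succ]
            ring
          · rw [Nat.choose_eq_zero_of_lt (show m + 1 - b < a + 1 by omega),
              Nat.choose_eq_zero_of_lt (show m - b < a + 1 by omega)]
            have z3 : Nat.choose (m - b) a * Nat.choose (m - 1 - a) b = 0 := by
              rcases Nat.eq_zero_or_pos a with rfl | hapos
              · rw [Nat.choose_eq_zero_of_lt (show m - 1 - 0 < b by omega)]
                ring
              · rw [Nat.choose_eq_zero_of_lt (show m - b < a by omega)]
                ring
            rw [z3]
            simp

theorem count_nonconsecutive_subsets (n : ℕ) (hn : 1 ≤ n) (a b : ℕ) :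
    ((Finset.Icc 1 (2 * n)).powerset.filter (fun S =>
        (∀ x ∈ S, x + 1 ∉ S) ∧
        (S.filter (fun x => ¬ Even x)).card = a ∧
        (S.filter (fun x => Even x)).card = b)).card =
      Nat.choose (n - b) a * Nat.choose (n - a) b := by
  have h := cnt_formula (2*n) a b
  rw [cnt] at h
  have e1 : (2*n+1)/2 = n := by omega
  have e2 : (2*n)/2 = n := by omega
  rw [e1, e2] at h
  exact h
end

section
/- For 1 ≤ i ≤ k and 0 ≤ j ≤ i, let c denote the number of subsets S of {1,…,2k} with exactly k−i−j odd elements, exactly j even elements, and no two circularly consecutive elements (mod 2k). Then i·c = k·d, where d is the number of subsets of {1,…,2k−2} with k−i−j odd elements, j even elements, and no two (linearly) consecutive elements. -/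
set_option linter.unusedSectionVars false
set_option linter.unusedVariables false

lemma mod_parity (a k : ℕ) : a % (2*k) % 2 = a % 2 := by
  have h : a = 2*(k*(a / (2*k))) + a % (2*k) := by
    conv_lhs => rw [← Nat.div_add_mod a (2*k)]
    ring
  omega

lemma mod_sub' (a m : ℕ) (h1 : m ≤ a) (h2 : a < 2*m) : a % m = a - m := by
  rw [Nat.mod_eq_sub_mod h1]
  exact Nat.mod_eq_of_lt (by omega)

lemma filter_image_card (S : Finset ℕ) (f : ℕ → ℕ) (P : ℕ → Prop) [DecidablePred P]
    (hinj : Set.InjOn f S) (hP : ∀ p ∈ S, (P (f p) ↔ P p)) :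
    ((S.image f).filter P).card = (S.filter P).card := by
  rw [Finset.filter_image, Finset.card_image_of_injOn
    (hinj.mono (fun a ha => (Finset.mem_filter.mp ha).1))]
  congr 1
  apply Finset.filter_congr
  intro a ha
  simp [hP a ha]

def rotF (k x p : ℕ) : ℕ := (p + (2*k - 1 - x)) % (2*k)
def rotG (k x q : ℕ) : ℕ := (q + x) % (2*k) + 1

section rotlemmas
variable {k x : ℕ} (hk : 1 ≤ k) (hx1 : 1 ≤ x) (hxlt : x < 2*k)

include hk hx1 hxlt in
lemma rotGF (p : ℕ) (h1 : 1 ≤ p) (h2 : p ≤ 2*k) : rotG k x (rotF k x p) = p := by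
  unfold rotF rotG
  rw [Nat.mod_add_mod]
  have e1 : p + (2*k-1-x) + x = (p-1) + 2*k := by omega
  rw [e1, Nat.add_mod_right, Nat.mod_eq_of_lt (by omega)]
  omega

include hk hx1 hxlt in
lemma rotFG (q : ℕ) (hq : q < 2*k) : rotF k x (rotG k x q) = q := by
  unfold rotF rotG
  have e0 : (q+x) % (2*k) + 1 + (2*k-1-x) = (q+x) % (2*k) + (1 + (2*k-1-x)) := by omega
  rw [e0, Nat.mod_add_mod]
  have e1 : q + x + (1 + (2*k-1-x)) = q + 2*k := by omega
  rw [e1, Nat.add_mod_right, Nat.mod_eq_of_lt hq]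

include hxlt in
lemma rotF_par (hxodd : x % 2 = 1) (p : ℕ) : rotF k x p % 2 = p % 2 := by
  have := mod_parity (p + (2*k-1-x)) k
  unfold rotF
  omega

include hxlt in
lemma rotG_par (hxodd : x % 2 = 1) (q : ℕ) : rotG k x q % 2 = q % 2 := by
  have := mod_parity (q + x) k
  unfold rotG
  omega

include hk in
lemma rotG_range (q : ℕ) : 1 ≤ rotG k x q ∧ rotG k x q ≤ 2*k := by
  have := Nat.mod_lt (q + x) (y := 2*k) (by omega)
  unfold rotG
  omega

include hk hx1 hxlt in
lemma rotF_range (p : ℕ) (h1 : 1 ≤ p) (h2 : p ≤ 2*k) (hne1 : p ≠ x) (hne2 : p ≠ x + 1) :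
    1 ≤ rotF k x p ∧ rotF k x p ≤ 2*k - 2 := by
  unfold rotF
  rcases Nat.lt_or_ge (p + (2*k-1-x)) (2*k) with h | h
  · rw [Nat.mod_eq_of_lt h]
    omega
  · rw [mod_sub' _ _ h (by omega)]
    omega

include hk hx1 hxlt in
lemma rotG_rotF_succ (p : ℕ) : rotG k x (rotF k x p + 1) = p % (2*k) + 1 := by
  unfold rotF rotG
  have e : (p + (2*k-1-x)) % (2*k) + 1 + x = (p + (2*k-1-x)) % (2*k) + (1 + x) := by omega
  rw [e, Nat.mod_add_mod]
  have e2 : p + (2*k-1-x) + (1+x) = p + 2*k := by omega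
  rw [e2, Nat.add_mod_right]

include hk hx1 hxlt in
lemma rotF_mod_succ (p : ℕ) : rotF k x (p % (2*k) + 1) = (rotF k x p + 1) % (2*k) := by
  unfold rotF
  have e : p % (2*k) + 1 + (2*k-1-x) = p % (2*k) + (1 + (2*k-1-x)) := by omega
  rw [e, Nat.mod_add_mod, Nat.mod_add_mod]
  congr 1
  omega

include hk hx1 hxlt in
lemma rotF_x : rotF k x x = 2*k - 1 := by
  unfold rotF
  have e : x + (2*k-1-x) = 2*k - 1 := by omega
  rw [e, Nat.mod_eq_of_lt (by omega)]

include hk hx1 hxlt in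
lemma rotF_x1 : rotF k x (x+1) = 0 := by
  unfold rotF
  have e : x + 1 + (2*k-1-x) = 2*k := by omega
  rw [e, Nat.mod_self]

end rotlemmas

lemma rot_card (k i j x : ℕ) (hk : 1 ≤ k) (hx1 : 1 ≤ x) (hx2 : x ≤ 2*k) (hxodd : ¬ Even x) :
    (((Finset.Icc 1 (2 * k)).powerset.filter (fun S =>
          (∀ y ∈ S, (y % (2 * k) + 1) ∉ S) ∧
          ((S.filter (fun y => ¬ Even y)).card : ℤ) = (k : ℤ) - i - j ∧
          (S.filter (fun y => Even y)).card = j)).filter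
        (fun S => x ∉ S ∧ x + 1 ∉ S)).card =
    ((Finset.Icc 1 (2 * k - 2)).powerset.filter (fun S =>
          (∀ y ∈ S, y + 1 ∉ S) ∧
          ((S.filter (fun y => ¬ Even y)).card : ℤ) = (k : ℤ) - i - j ∧
          (S.filter (fun y => Even y)).card = j)).card := by
  have hxm : x % 2 = 1 := Nat.not_even_iff.mp hxodd
  have hxlt : x < 2*k := by omega
  apply Finset.card_bij' (i := fun S _ => S.image (rotF k x)) (j := fun T _ => T.image (rotG k x))
  -- left inverse
  · intro S hS
    rw [Finset.mem_filter, Finset.mem_filter, Finset.mem_powerset] at hS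
    obtain ⟨⟨hsub, _⟩, _⟩ := hS
    rw [Finset.image_image]
    have h : S.image (rotG k x ∘ rotF k x) = S.image id := by
      apply Finset.image_congr
      intro p hp
      have := hsub hp
      rw [Finset.mem_Icc] at this
      exact rotGF hk hx1 hxlt p this.1 this.2
    rw [h, Finset.image_id]
  -- right inverse
  · intro T hT
    rw [Finset.mem_filter, Finset.mem_powerset] at hT
    obtain ⟨hsub, _⟩ := hT
    rw [Finset.image_image]
    have h : T.image (rotF k x ∘ rotG k x) = T.image id := by
      apply Finset.image_congr
      intro q hq
      have := hsub hq
      rw [Finset.mem_Icc] at this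
      exact rotFG hk hx1 hxlt q (by omega)
    rw [h, Finset.image_id]
  -- hi : image rotF lands in target
  · intro S hS
    rw [Finset.mem_filter, Finset.mem_filter, Finset.mem_powerset] at hS
    obtain ⟨⟨hsub, hcirc, hodd, heven⟩, hxS, hx1S⟩ := hS
    have hmem : ∀ p ∈ S, 1 ≤ p ∧ p ≤ 2*k := by
      intro p hp
      have := hsub hp
      rw [Finset.mem_Icc] at this
      exact this
    have hinj : Set.InjOn (rotF k x) S := by
      intro a ha b hb hab
      have ha' := hmem a ha
      have hb' := hmem b hb
      rw [← rotGF hk hx1 hxlt a ha'.1 ha'.2, ← rotGF hk hx1 hxlt b hb'.1 hb'.2, hab]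
    have hpar : ∀ p, (Even (rotF k x p) ↔ Even p) := by
      intro p
      rw [Nat.even_iff, Nat.even_iff, rotF_par hxlt hxm]
    rw [Finset.mem_filter, Finset.mem_powerset]
    refine ⟨?_, ?_, ?_, ?_⟩
    · intro q hq
      obtain ⟨p, hp, rfl⟩ := Finset.mem_image.mp hq
      have hp' := hmem p hp
      have hne1 : p ≠ x := fun h => hxS (h ▸ hp)
      have hne2 : p ≠ x + 1 := fun h => hx1S (h ▸ hp)
      have := rotF_range hk hx1 hxlt p hp'.1 hp'.2 hne1 hne2
      rw [Finset.mem_Icc]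
      exact this
    · intro q hq hq1
      obtain ⟨p, hp, rfl⟩ := Finset.mem_image.mp hq
      obtain ⟨p', hp', he⟩ := Finset.mem_image.mp hq1
      have hb' := hmem p' hp'
      have : p' = p % (2*k) + 1 := by
        rw [← rotGF hk hx1 hxlt p' hb'.1 hb'.2, he, rotG_rotF_succ hk hx1 hxlt]
      exact hcirc p hp (this ▸ hp')
    · rw [filter_image_card S _ _ hinj (fun p _ => not_congr (hpar p))]
      exact hodd
    · rw [filter_image_card S _ _ hinj (fun p _ => hpar p)]
      exact heven
  -- hj : image rotG lands in source
  · intro T hT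
    rw [Finset.mem_filter, Finset.mem_powerset] at hT
    obtain ⟨hsub, hlin, hodd, heven⟩ := hT
    have hmem : ∀ q ∈ T, 1 ≤ q ∧ q ≤ 2*k - 2 := by
      intro q hq
      have := hsub hq
      rw [Finset.mem_Icc] at this
      exact this
    have hinj : Set.InjOn (rotG k x) T := by
      intro a ha b hb hab
      have ha' := hmem a ha
      have hb' := hmem b hb
      rw [← rotFG hk hx1 hxlt a (by omega), ← rotFG hk hx1 hxlt b (by omega), hab]
    have hpar : ∀ q, (Even (rotG k x q) ↔ Even q) := by
      intro q
      rw [Nat.even_iff, Nat.even_iff, rotG_par hxlt hxm]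
    rw [Finset.mem_filter, Finset.mem_filter, Finset.mem_powerset]
    refine ⟨⟨?_, ?_, ?_, ?_⟩, ?_, ?_⟩
    · intro p hp
      obtain ⟨q, hq, rfl⟩ := Finset.mem_image.mp hp
      rw [Finset.mem_Icc]
      exact rotG_range hk q
    · intro p hp hp1
      obtain ⟨q, hq, rfl⟩ := Finset.mem_image.mp hp
      obtain ⟨q', hq', he⟩ := Finset.mem_image.mp hp1
      have hq'' := hmem q hq
      have hq''' := hmem q' hq'
      have hkey : q' = q + 1 := by
        have h1 : rotF k x (rotG k x q % (2*k) + 1) = (q + 1) % (2*k) := by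
          rw [rotF_mod_succ hk hx1 hxlt, rotFG hk hx1 hxlt q (by omega)]
        rw [← rotFG hk hx1 hxlt q' (by omega), he, h1, Nat.mod_eq_of_lt (by omega)]
      exact hlin q hq (hkey ▸ hq')
    · rw [filter_image_card T _ _ hinj (fun q _ => not_congr (hpar q))]
      exact hodd
    · rw [filter_image_card T _ _ hinj (fun q _ => hpar q)]
      exact heven
    · intro hx'
      obtain ⟨q, hq, he⟩ := Finset.mem_image.mp hx'
      have hq' := hmem q hq
      have : q = 2*k - 1 := by
        rw [← rotFG hk hx1 hxlt q (by omega), he, rotF_x hk hx1 hxlt]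
      omega
    · intro hx'
      obtain ⟨q, hq, he⟩ := Finset.mem_image.mp hx'
      have hq' := hmem q hq
      have : q = 0 := by
        rw [← rotFG hk hx1 hxlt q (by omega), he, rotF_x1 hk hx1 hxlt]
      omega

lemma goods_card (k : ℕ) (hk : 1 ≤ k) (S : Finset ℕ) (hS : S ⊆ Finset.Icc 1 (2*k))
    (hcirc : ∀ x ∈ S, (x % (2*k) + 1) ∉ S) :
    (((Finset.Icc 1 (2*k)).filter (fun x => ¬ Even x)).filter
        (fun x => x ∉ S ∧ x+1 ∉ S)).card + S.card = k := by
  set Odds := (Finset.Icc 1 (2*k)).filter (fun x => ¬ Even x) with hO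
  have hOcard : Odds.card = k := by
    rw [hO]
    have h : (Finset.Icc 1 (2*k)).filter (fun x => ¬ Even x)
        = (Finset.range k).image (fun t => 2*t+1) := by
      ext x
      simp only [Finset.mem_filter, Finset.mem_Icc, Finset.mem_image, Finset.mem_range,
        Nat.even_iff]
      constructor
      · rintro ⟨⟨h1, h2⟩, h3⟩
        exact ⟨x / 2, by omega, by omega⟩
      · rintro ⟨t, ht, rfl⟩
        omega
    rw [h, Finset.card_image_of_injective _ (fun a b h => by omega), Finset.card_range]
  have hbad : Odds.filter (fun x => ¬(x ∉ S ∧ x+1 ∉ S))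
      = S.image (fun s => if Even s then s - 1 else s) := by
    ext y
    constructor
    · intro hy
      rw [Finset.mem_filter] at hy
      obtain ⟨hy1, hy2⟩ := hy
      rw [hO, Finset.mem_filter, Finset.mem_Icc] at hy1
      by_cases hyS : y ∈ S
      · exact Finset.mem_image.mpr ⟨y, hyS, if_neg hy1.2⟩
      · have h2 : y + 1 ∈ S := by tauto
        refine Finset.mem_image.mpr ⟨y+1, h2, ?_⟩
        rw [if_pos (Nat.even_add_one.mpr hy1.2)]
        omega
    · intro hy
      obtain ⟨s, hsS, hsy⟩ := Finset.mem_image.mp hy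
      have hs' := hS hsS
      rw [Finset.mem_Icc] at hs'
      rw [Finset.mem_filter, hO, Finset.mem_filter, Finset.mem_Icc]
      by_cases hev : Even s
      · rw [if_pos hev] at hsy
        rw [Nat.even_iff] at hev
        subst hsy
        have hsplus : s - 1 + 1 = s := by omega
        constructor
        · refine ⟨⟨by omega, by omega⟩, ?_⟩
          rw [Nat.even_iff]
          omega
        · rw [hsplus]
          tauto
      · rw [if_neg hev] at hsy
        subst hsy
        exact ⟨⟨hs', hev⟩, by tauto⟩
  have hinj : Set.InjOn (fun s => if Even s then s - 1 else s) S := by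
    intro a ha b hb hab
    simp only at hab
    have ha' := hS ha; have hb' := hS hb
    rw [Finset.mem_Icc] at ha' hb'
    by_cases hea : Even a <;> by_cases heb : Even b
    · rw [if_pos hea, if_pos heb] at hab
      rw [Nat.even_iff] at hea heb
      omega
    · rw [if_pos hea, if_neg heb] at hab
      have hblt : b < 2*k := by
        rcases Nat.lt_or_ge b (2*k) with h | h
        · exact h
        · exfalso; apply heb
          have : b = 2*k := by omega
          exact this ▸ ⟨k, by ring⟩
      exfalso
      apply hcirc b hb
      rw [Nat.mod_eq_of_lt hblt]
      have hea2 : a % 2 = 0 := Nat.even_iff.mp hea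
      have : b + 1 = a := by omega
      rwa [this]
    · rw [if_neg hea, if_pos heb] at hab
      have halt : a < 2*k := by
        rcases Nat.lt_or_ge a (2*k) with h | h
        · exact h
        · exfalso; apply hea
          have : a = 2*k := by omega
          exact this ▸ ⟨k, by ring⟩
      exfalso
      apply hcirc a ha
      rw [Nat.mod_eq_of_lt halt]
      have heb2 : b % 2 = 0 := Nat.even_iff.mp heb
      have : a + 1 = b := by omega
      rwa [this]
    · rw [if_neg hea, if_neg heb] at hab
      exact hab
  have hsplit := Finset.card_filter_add_card_filter_not
    (s := Odds) (p := fun x => x ∉ S ∧ x+1 ∉ S)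
  rw [hbad, Finset.card_image_of_injOn hinj] at hsplit
  omega

lemma odds_card (k : ℕ) : ((Finset.Icc 1 (2*k)).filter (fun x => ¬ Even x)).card = k := by
  have h : (Finset.Icc 1 (2*k)).filter (fun x => ¬ Even x)
      = (Finset.range k).image (fun t => 2*t+1) := by
    ext x
    simp only [Finset.mem_filter, Finset.mem_Icc, Finset.mem_image, Finset.mem_range,
      Nat.even_iff]
    constructor
    · rintro ⟨⟨h1, h2⟩, h3⟩
      exact ⟨x / 2, by omega, by omega⟩
    · rintro ⟨t, ht, rfl⟩
      omega
  rw [h, Finset.card_image_of_injective _ (fun a b h => by omega), Finset.card_range]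

theorem circular_linear_count_relation (k i j : ℕ) (hi : 1 ≤ i) (hik : i ≤ k) (hj : j ≤ i) :
    i * ((Finset.Icc 1 (2 * k)).powerset.filter (fun S =>
          (∀ x ∈ S, (x % (2 * k) + 1) ∉ S) ∧
          ((S.filter (fun x => ¬ Even x)).card : ℤ) = (k : ℤ) - i - j ∧
          (S.filter (fun x => Even x)).card = j)).card =
    k * ((Finset.Icc 1 (2 * k - 2)).powerset.filter (fun S =>
          (∀ x ∈ S, x + 1 ∉ S) ∧
          ((S.filter (fun x => ¬ Even x)).card : ℤ) = (k : ℤ) - i - j ∧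
          (S.filter (fun x => Even x)).card = j)).card := by
  have hk : 1 ≤ k := le_trans hi hik
  set C := (Finset.Icc 1 (2 * k)).powerset.filter (fun S =>
          (∀ x ∈ S, (x % (2 * k) + 1) ∉ S) ∧
          ((S.filter (fun x => ¬ Even x)).card : ℤ) = (k : ℤ) - i - j ∧
          (S.filter (fun x => Even x)).card = j) with hC
  set D := (Finset.Icc 1 (2 * k - 2)).powerset.filter (fun S =>
          (∀ x ∈ S, x + 1 ∉ S) ∧
          ((S.filter (fun x => ¬ Even x)).card : ℤ) = (k : ℤ) - i - j ∧
          (S.filter (fun x => Even x)).card = j) with hD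
  calc i * C.card = ∑ S ∈ C, i := by
        simp [Finset.sum_const, mul_comm]
    _ = ∑ S ∈ C, (((Finset.Icc 1 (2 * k)).filter (fun x => ¬ Even x)).filter
          (fun x => x ∉ S ∧ x + 1 ∉ S)).card := by
        apply Finset.sum_congr rfl
        intro S hS
        rw [hC, Finset.mem_filter, Finset.mem_powerset] at hS
        obtain ⟨hsub, hcirc, hodd, heven⟩ := hS
        have hgc := goods_card k hk S hsub hcirc
        have hoddn : (S.filter (fun x => ¬ Even x)).card + i + j = k := by
          have h2 : (((S.filter (fun x => ¬ Even x)).card : ℤ)) + i + j = k := by omega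
          exact_mod_cast h2
        have hcardS := Finset.card_filter_add_card_filter_not
          (s := S) (p := fun x => Even x)
        omega
    _ = ∑ S ∈ C, ∑ x ∈ (Finset.Icc 1 (2 * k)).filter (fun x => ¬ Even x),
          (if x ∉ S ∧ x + 1 ∉ S then 1 else 0) := by
        simp only [Finset.card_filter]
    _ = ∑ x ∈ (Finset.Icc 1 (2 * k)).filter (fun x => ¬ Even x), ∑ S ∈ C,
          (if x ∉ S ∧ x + 1 ∉ S then 1 else 0) := Finset.sum_comm
    _ = ∑ x ∈ (Finset.Icc 1 (2 * k)).filter (fun x => ¬ Even x),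
          (C.filter (fun S => x ∉ S ∧ x + 1 ∉ S)).card := by
        simp only [Finset.card_filter]
    _ = ∑ x ∈ (Finset.Icc 1 (2 * k)).filter (fun x => ¬ Even x), D.card := by
        apply Finset.sum_congr rfl
        intro x hx
        rw [Finset.mem_filter, Finset.mem_Icc] at hx
        rw [hC, hD]
        exact rot_card k i j x hk hx.1.1 hx.1.2 hx.2
    _ = k * D.card := by
        rw [Finset.sum_const, odds_card, smul_eq_mul]
end
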